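/- Let θ₁ > θ₂ > 0, and let g(x;θ) = (θ/(θ+3))·(2+θ+θx)·e^{-θx} be the i-Garima density. Then the likelihood ratio x ↦ g(x;θ₁)/g(x;θ₂) is strictly decreasing on (0,∞); that is, X ~ i-Garima(θ₁) is smaller than Y ~ i-Garima(θ₂) in the likelihood ratio order. -/

import Mathlib

/-- Likelihood ratio ordering: for θ₁ > θ₂ > 0 the ratio of i-Garima densities
g(x;θ₁)/g(x;θ₂) is strictly decreasing on (0,∞). -/
theorem iGarima_likelihood_ratio_order (θ₁ θ₂ : ℝ) (hθ₂ : 0 < θ₂) (h : θ₂ < θ₁) :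
    StrictAntiOn
      (fun x : ℝ =>
        ((θ₁ / (θ₁ + 3)) * (2 + θ₁ + θ₁ * x) * Real.exp (-θ₁ * x))
          / ((θ₂ / (θ₂ + 3)) * (2 + θ₂ + θ₂ * x) * Real.exp (-θ₂ * x)))
      (Set.Ioi 0) := by
  have hθ₁ : 0 < θ₁ := hθ₂.trans h
  have hc₁ : 0 < θ₁ / (θ₁ + 3) := by positivity
  have hc₂ : 0 < θ₂ / (θ₂ + 3) := by positivity
  apply strictAntiOn_of_deriv_neg (convex_Ioi 0)
  · apply ContinuousOn.div
    · fun_prop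
    · fun_prop
    · intro x hx
      have hx' : (0:ℝ) < x := hx
      have : 0 < 2 + θ₂ + θ₂ * x := by positivity
      positivity
  · intro x hx
    rw [interior_Ioi] at hx
    have hx' : (0:ℝ) < x := hx
    have hA₁ : HasDerivAt (fun x : ℝ => 2 + θ₁ + θ₁ * x) θ₁ x := by
      simpa using ((hasDerivAt_id x).const_mul θ₁).const_add (2 + θ₁)
    have hA₂ : HasDerivAt (fun x : ℝ => 2 + θ₂ + θ₂ * x) θ₂ x := by
      simpa using ((hasDerivAt_id x).const_mul θ₂).const_add (2 + θ₂)
    have hE₁ : HasDerivAt (fun x : ℝ => Real.exp (-θ₁ * x)) (-θ₁ * Real.exp (-θ₁ * x)) x := by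
      have := ((hasDerivAt_id x).const_mul (-θ₁)).exp
      simpa [mul_comm] using this
    have hE₂ : HasDerivAt (fun x : ℝ => Real.exp (-θ₂ * x)) (-θ₂ * Real.exp (-θ₂ * x)) x := by
      have := ((hasDerivAt_id x).const_mul (-θ₂)).exp
      simpa [mul_comm] using this
    have hu : HasDerivAt (fun x : ℝ => (θ₁ / (θ₁ + 3)) * (2 + θ₁ + θ₁ * x) * Real.exp (-θ₁ * x))
        ((θ₁ / (θ₁ + 3)) * θ₁ * Real.exp (-θ₁ * x)
          + (θ₁ / (θ₁ + 3)) * (2 + θ₁ + θ₁ * x) * (-θ₁ * Real.exp (-θ₁ * x))) x :=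
      (hA₁.const_mul _).mul hE₁
    have hv : HasDerivAt (fun x : ℝ => (θ₂ / (θ₂ + 3)) * (2 + θ₂ + θ₂ * x) * Real.exp (-θ₂ * x))
        ((θ₂ / (θ₂ + 3)) * θ₂ * Real.exp (-θ₂ * x)
          + (θ₂ / (θ₂ + 3)) * (2 + θ₂ + θ₂ * x) * (-θ₂ * Real.exp (-θ₂ * x))) x :=
      (hA₂.const_mul _).mul hE₂
    have hA₂pos : (0:ℝ) < 2 + θ₂ + θ₂ * x := by positivity
    have hvne : (θ₂ / (θ₂ + 3)) * (2 + θ₂ + θ₂ * x) * Real.exp (-θ₂ * x) ≠ 0 := by positivity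
    have hd : HasDerivAt (fun x : ℝ => ((θ₁ / (θ₁ + 3)) * (2 + θ₁ + θ₁ * x) * Real.exp (-θ₁ * x))
          / ((θ₂ / (θ₂ + 3)) * (2 + θ₂ + θ₂ * x) * Real.exp (-θ₂ * x))) _ x := (hu.div hv hvne)
    rw [hd.deriv]
    apply div_neg_of_neg_of_pos
    · -- numerator negative
      have hE₁pos : 0 < Real.exp (-θ₁ * x) := Real.exp_pos _
      have hE₂pos : 0 < Real.exp (-θ₂ * x) := Real.exp_pos _
      have hA₁pos : (0:ℝ) < 2 + θ₁ + θ₁ * x := by positivity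
      have key : θ₁ * (2 + θ₂ + θ₂ * x) - θ₂ * (2 + θ₁ + θ₁ * x)
          - (θ₁ - θ₂) * ((2 + θ₁ + θ₁ * x) * (2 + θ₂ + θ₂ * x)) < 0 := by
        have h2 : (2:ℝ) < (2 + θ₁ + θ₁ * x) * (2 + θ₂ + θ₂ * x) := by
          nlinarith [mul_pos hθ₁ hx', mul_pos hθ₂ hx']
        nlinarith [mul_pos (sub_pos.2 h) (sub_pos.2 h2)]
      have : ((θ₁ / (θ₁ + 3)) * θ₁ * Real.exp (-θ₁ * x)
          + (θ₁ / (θ₁ + 3)) * (2 + θ₁ + θ₁ * x) * (-θ₁ * Real.exp (-θ₁ * x)))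
            * ((θ₂ / (θ₂ + 3)) * (2 + θ₂ + θ₂ * x) * Real.exp (-θ₂ * x))
          - (θ₁ / (θ₁ + 3)) * (2 + θ₁ + θ₁ * x) * Real.exp (-θ₁ * x)
            * ((θ₂ / (θ₂ + 3)) * θ₂ * Real.exp (-θ₂ * x)
              + (θ₂ / (θ₂ + 3)) * (2 + θ₂ + θ₂ * x) * (-θ₂ * Real.exp (-θ₂ * x)))
          = (θ₁ / (θ₁ + 3)) * (θ₂ / (θ₂ + 3)) * (Real.exp (-θ₁ * x) * Real.exp (-θ₂ * x))
            * (θ₁ * (2 + θ₂ + θ₂ * x) - θ₂ * (2 + θ₁ + θ₁ * x)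
              - (θ₁ - θ₂) * ((2 + θ₁ + θ₁ * x) * (2 + θ₂ + θ₂ * x))) := by ring
      rw [this]
      have hpos : 0 < (θ₁ / (θ₁ + 3)) * (θ₂ / (θ₂ + 3)) * (Real.exp (-θ₁ * x) * Real.exp (-θ₂ * x)) := by
        positivity
      exact mul_neg_of_pos_of_neg hpos key
    · positivity
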